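/- Let λ ∈ (ℝ ∪ {∞})ⁿ satisfy both (a) the tropical incidence relation: the minimum of λ₁,…,λₙ is attained at least twice (or all are ∞), and (b) λᵢ ≥ min(λᵢ₋₁, λᵢ₊₁) for all i (with λ₀ = λₙ₊₁ = ∞). Then λ also satisfies the positivity relation: min over odd i of λᵢ equals min over even i of λᵢ. -/
import Mathlib


/-- Let `λ ∈ (ℝ ∪ {∞})ⁿ` (with `λ₀ = λₙ₊₁ = ∞`) satisfy (a) the
tropical incidence relation (the minimum of `λ₁,…,λₙ` is attained at least twice,
or all are `∞`), and (b) `λᵢ ≥ min (λᵢ₋₁, λᵢ₊₁)` for all `i`.  Then the minimum of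
`λᵢ` over odd `i` equals the minimum over even `i` (empty minima being `∞`). -/
theorem stmt14 (n : ℕ) (lam : ℕ → WithTop ℝ)
    (h0 : lam 0 = ⊤) (htop : lam (n + 1) = ⊤)
    (ha : (∃ i ∈ Finset.Icc 1 n, ∃ j ∈ Finset.Icc 1 n, i ≠ j ∧ lam i = lam j ∧
            ∀ k ∈ Finset.Icc 1 n, lam i ≤ lam k) ∨
          (∀ i ∈ Finset.Icc 1 n, lam i = ⊤))
    (hb : ∀ i, 1 ≤ i → i ≤ n → min (lam (i - 1)) (lam (i + 1)) ≤ lam i) :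
    ((Finset.Icc 1 n).filter fun i => Odd i).inf lam =
      ((Finset.Icc 1 n).filter fun i => Even i).inf lam := by
  set m : WithTop ℝ := (Finset.Icc 1 n).inf lam with hm
  by_cases hT : ∀ i ∈ Finset.Icc 1 n, lam i = ⊤
  · have h1 : ((Finset.Icc 1 n).filter fun i => Odd i).inf lam = ⊤ := by
      rw [Finset.inf_eq_top_iff]
      intro i hi
      exact hT i (Finset.mem_of_mem_filter i hi)
    have h2 : ((Finset.Icc 1 n).filter fun i => Even i).inf lam = ⊤ := by
      rw [Finset.inf_eq_top_iff]
      intro i hi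
      exact hT i (Finset.mem_of_mem_filter i hi)
    rw [h1, h2]
  · push_neg at hT
    obtain ⟨i, hi, hine⟩ := hT
    have hmtop : m < ⊤ := lt_of_le_of_lt (Finset.inf_le hi) (lt_top_iff_ne_top.mpr hine)
    -- there is a minimizer
    have hP : ∃ k, 1 ≤ k ∧ k ≤ n ∧ lam k = m := by
      obtain ⟨k, hk, hkeq⟩ := Finset.exists_mem_eq_inf (Finset.Icc 1 n) ⟨i, hi⟩ lam
      rw [Finset.mem_Icc] at hk
      exact ⟨k, hk.1, hk.2, hkeq.symm⟩
    classical
    set i₀ := Nat.find hP with hi₀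
    obtain ⟨hi₀1, hi₀n, hi₀m⟩ := Nat.find_spec hP
    have hlt : ∀ j, 1 ≤ j → j ≤ n → j < i₀ → m < lam j := by
      intro j hj1 hjn hji
      have hne := Nat.find_min hP hji
      push_neg at hne
      have hle : m ≤ lam j := Finset.inf_le (Finset.mem_Icc.mpr ⟨hj1, hjn⟩)
      exact lt_of_le_of_ne hle (fun h => hne hj1 hjn h.symm)
    -- lam (i₀ - 1) > m
    have hprev : m < lam (i₀ - 1) := by
      rcases Nat.eq_or_lt_of_le hi₀1 with h | h
      · have h1 : i₀ = 1 := by omega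
        rw [h1]
        simpa [h0] using hmtop
      · exact hlt (i₀ - 1) (by omega) (by omega) (by omega)
    -- from hb, lam (i₀ + 1) ≤ m
    have hnext : lam (i₀ + 1) ≤ m := by
      have := hb i₀ hi₀1 hi₀n
      rw [hi₀m, min_le_iff] at this
      rcases this with h | h
      · exact absurd h (not_le.mpr hprev)
      · exact h
    -- i₀ + 1 ≤ n
    have hsn : i₀ + 1 ≤ n := by
      by_contra h
      have : i₀ = n := by omega
      rw [this, htop] at hnext
      exact hmtop.ne (le_antisymm le_top hnext)
    have hnextmem : i₀ + 1 ∈ Finset.Icc 1 n := Finset.mem_Icc.mpr ⟨by omega, hsn⟩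
    have hnexteq : lam (i₀ + 1) = m :=
      le_antisymm hnext (Finset.inf_le hnextmem)
    have hmem : i₀ ∈ Finset.Icc 1 n := Finset.mem_Icc.mpr ⟨hi₀1, hi₀n⟩
    -- both filtered infs equal m
    have hgeO : m ≤ ((Finset.Icc 1 n).filter fun i => Odd i).inf lam :=
      Finset.le_inf fun j hj => Finset.inf_le (Finset.mem_of_mem_filter j hj)
    have hgeE : m ≤ ((Finset.Icc 1 n).filter fun i => Even i).inf lam :=
      Finset.le_inf fun j hj => Finset.inf_le (Finset.mem_of_mem_filter j hj)
    have hleO : ((Finset.Icc 1 n).filter fun i => Odd i).inf lam ≤ m := by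
      rcases Nat.even_or_odd i₀ with he | ho
      · calc _ ≤ lam (i₀ + 1) :=
              Finset.inf_le (Finset.mem_filter.mpr ⟨hnextmem, he.add_one⟩)
          _ = m := hnexteq
      · calc _ ≤ lam i₀ := Finset.inf_le (Finset.mem_filter.mpr ⟨hmem, ho⟩)
          _ = m := hi₀m
    have hleE : ((Finset.Icc 1 n).filter fun i => Even i).inf lam ≤ m := by
      rcases Nat.even_or_odd i₀ with he | ho
      · calc _ ≤ lam i₀ := Finset.inf_le (Finset.mem_filter.mpr ⟨hmem, he⟩)
          _ = m := hi₀m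
      · calc _ ≤ lam (i₀ + 1) :=
              Finset.inf_le (Finset.mem_filter.mpr ⟨hnextmem, ho.add_one⟩)
          _ = m := hnexteq
    rw [le_antisymm hleO hgeO, le_antisymm hleE hgeE]
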